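/- Let Y be a compactification of the discrete space ℕ, given by an injective map d : ℕ → Y with dense range and each d(n) isolated in Y, with remainder R = Y \ d(ℕ), and let Z₀ = {f ∈ C(Y) : f(y) = 0 for every y ∈ R}. Then: (i) the map sending f ∈ Z₀ to the sequence (f(d(n)))_{n ∈ ℕ} is a linear isometric bijection from Z₀ onto c₀; (ii) the restriction operator ρ : C(Y) → C(R), ρ(f) = f restricted to R, is a bounded surjective linear operator whose kernel is Z₀, and the induced map from the quotient Banach space C(Y)/Z₀ to C(R) is an isometric isomorphism. -/

import Mathlib

open Cardinal Set Filter Topology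

/-- The Banach space `c₀` of real sequences converging to `0`, with the sup norm. -/
abbrev czero : Type := ZeroAtInftyContinuousMap ℕ ℝ

/-- There exists a nontrivial twisted sum of `Y` and `X`: a short exact sequence
`0 → Y → Z → X → 0` of Banach spaces in which the image of `Y` is not complemented. -/
def ExistsNontrivialTwistedSum (Y X : Type) [NormedAddCommGroup Y] [NormedSpace ℝ Y]
    [NormedAddCommGroup X] [NormedSpace ℝ X] : Prop :=
  ∃ (Z : Type) (_ : NormedAddCommGroup Z) (_ : NormedSpace ℝ Z) (_ : CompleteSpace Z)
    (j : Y →L[ℝ] Z) (q : Z →L[ℝ] X),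
      Function.Injective j ∧ IsClosed (Set.range j) ∧ Function.Surjective q ∧
      LinearMap.ker (q : Z →ₗ[ℝ] X) = LinearMap.range (j : Y →ₗ[ℝ] Z) ∧
      ¬(LinearMap.range (j : Y →ₗ[ℝ] Z)).ClosedComplemented
/-- The canonical copy of `c₀` in `C(Y)`: the continuous functions vanishing at every
point of the remainder `Y \ d(ℕ)`. -/
def Zsub (Y : Type) [TopologicalSpace Y] [CompactSpace Y] (d : ℕ → Y) :
    Submodule ℝ C(Y, ℝ) where
  carrier := {f : C(Y, ℝ) | ∀ y : Y, y ∉ Set.range d → f y = 0}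
  add_mem' := fun hf hg y hy => by simp [hf y hy, hg y hy]
  zero_mem' := fun y hy => rfl
  smul_mem' := fun c f hf y hy => by simp [hf y hy]


section Aux

variable {Y : Type} [TopologicalSpace Y] [CompactSpace Y] [T2Space Y]
  {d : ℕ → Y}

theorem aux_norm_le (hdense : DenseRange d) (f : C(Y, ℝ)) {c : ℝ} (hc : 0 ≤ c)
    (h : ∀ n, ‖f (d n)‖ ≤ c) : ‖f‖ ≤ c := by
  refine (f.norm_le hc).2 fun y => ?_
  have hcl : IsClosed {y : Y | ‖f y‖ ≤ c} :=
    IsClosed.preimage (f.continuous.norm) isClosed_Iic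
  have hsub : Set.range d ⊆ {y : Y | ‖f y‖ ≤ c} := by
    rintro _ ⟨n, rfl⟩; exact h n
  exact hcl.closure_subset_iff.2 hsub (hdense y)

theorem aux_finite (hinj : Function.Injective d) (hiso : ∀ n : ℕ, IsOpen ({d n} : Set Y))
    (f : C(Y, ℝ)) (hf : ∀ y : Y, y ∉ Set.range d → f y = 0) {ε : ℝ} (hε : 0 < ε) :
    {n : ℕ | ε ≤ ‖f (d n)‖}.Finite := by
  have hKc : IsCompact {y : Y | ε ≤ ‖f y‖} :=
    (IsClosed.preimage (f.continuous.norm) isClosed_Ici).isCompact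
  have hcover : {y : Y | ε ≤ ‖f y‖} ⊆ ⋃ n, ({d n} : Set Y) := by
    intro y hy
    have hy' : y ∈ Set.range d := by
      by_contra hc
      rw [Set.mem_setOf_eq, hf y hc, norm_zero] at hy
      exact absurd hy (not_le.2 hε)
    obtain ⟨n, rfl⟩ := hy'
    exact Set.mem_iUnion.2 ⟨n, rfl⟩
  obtain ⟨t, ht⟩ := hKc.elim_finite_subcover _ hiso hcover
  refine Set.Finite.subset t.finite_toSet fun n hn => ?_
  have : d n ∈ ⋃ m ∈ t, ({d m} : Set Y) := ht hn
  obtain ⟨m, hm, hdm⟩ := Set.mem_iUnion₂.1 this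
  exact hinj (Set.mem_singleton_iff.1 hdm) ▸ hm

theorem aux_tendsto (hinj : Function.Injective d) (hiso : ∀ n : ℕ, IsOpen ({d n} : Set Y))
    (f : C(Y, ℝ)) (hf : ∀ y : Y, y ∉ Set.range d → f y = 0) :
    Tendsto (fun n => f (d n)) (cocompact ℕ) (𝓝 0) := by
  rw [cocompact_eq_cofinite]
  refine Metric.tendsto_nhds.2 fun ε hε => ?_
  rw [Filter.eventually_cofinite]
  refine Set.Finite.subset (aux_finite hinj hiso f hf hε) fun n hn => ?_
  simp only [Set.mem_setOf_eq, dist_zero_right, not_lt] at hn ⊢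
  exact hn

theorem aux_extend (hinj : Function.Injective d) (hiso : ∀ n : ℕ, IsOpen ({d n} : Set Y))
    (g : ZeroAtInftyContinuousMap ℕ ℝ) :
    ∃ f : C(Y, ℝ), (∀ n, f (d n) = g n) ∧ ∀ y : Y, y ∉ Set.range d → f y = 0 := by
  set F : Y → ℝ := Function.extend d (⇑g) 0 with hF
  have hF0 : ∀ y : Y, y ∉ Set.range d → F y = 0 := fun y hy =>
    Function.extend_apply' _ _ _ (by simpa [Set.range] using hy)
  have hFd : ∀ n, F (d n) = g n := fun n => hinj.extend_apply _ _ _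
  have hcont : Continuous F := by
    refine continuous_iff_continuousAt.2 fun y => ?_
    by_cases hy : y ∈ Set.range d
    · obtain ⟨n, rfl⟩ := hy
      exact Filter.EventuallyEq.continuousAt (y := F (d n))
        (Filter.eventually_of_mem ((hiso n).mem_nhds rfl)
          (fun z hz => by rw [Set.mem_singleton_iff.1 hz]))
    · rw [ContinuousAt, hF0 y hy]
      refine Metric.tendsto_nhds.2 fun ε hε => ?_
      have hS : {n : ℕ | ε ≤ ‖g n‖}.Finite := by
        have := g.zero_at_infty'
        rw [cocompact_eq_cofinite] at this
        have h2 := Filter.eventually_cofinite.1 (Metric.tendsto_nhds.1 this ε hε)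
        refine h2.subset fun n hn => ?_
        simp only [Set.mem_setOf_eq, dist_zero_right, not_lt] at hn ⊢
        exact hn
      have hUo : IsOpen ((d '' {n : ℕ | ε ≤ ‖g n‖})ᶜ) :=
        ((hS.image d).isClosed).isOpen_compl
      have hyU : y ∈ (d '' {n : ℕ | ε ≤ ‖g n‖})ᶜ := fun hc =>
        hy (Set.image_subset_range d _ hc)
      refine Filter.eventually_of_mem (hUo.mem_nhds hyU) fun z hz => ?_
      by_cases hzr : z ∈ Set.range d
      · obtain ⟨n, rfl⟩ := hzr
        rw [hFd n, dist_zero_right]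
        by_contra hcon
        exact hz ⟨n, not_lt.1 hcon, rfl⟩
      · rw [hF0 z hzr, dist_self]; exact hε
  exact ⟨⟨F, hcont⟩, hFd, hF0⟩

end Aux

theorem aux_czero_norm_coe_le (g : ZeroAtInftyContinuousMap ℕ ℝ) (n : ℕ) : ‖g n‖ ≤ ‖g‖ := by
  rw [← ZeroAtInftyContinuousMap.norm_toBCF_eq_norm]
  exact g.toBCF.norm_coe_le_norm n

theorem aux_czero_norm_le (g : ZeroAtInftyContinuousMap ℕ ℝ) {c : ℝ} (hc : 0 ≤ c)
    (h : ∀ n, ‖g n‖ ≤ c) : ‖g‖ ≤ c := by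
  rw [← ZeroAtInftyContinuousMap.norm_toBCF_eq_norm]
  exact (BoundedContinuousFunction.norm_le hc).2 h

section Main

variable {Y : Type} [TopologicalSpace Y] [CompactSpace Y] [T2Space Y]
  {d : ℕ → Y}

theorem aux_mem_Zsub (f : C(Y, ℝ)) : f ∈ Zsub Y d ↔ ∀ y : Y, y ∉ Set.range d → f y = 0 :=
  Iff.rfl

/-- Part (i). -/
theorem aux_part1 (hinj : Function.Injective d) (hdense : DenseRange d)
    (hiso : ∀ n : ℕ, IsOpen ({d n} : Set Y)) :
    ∃ e : ↥(Zsub Y d) ≃ₗᵢ[ℝ] ZeroAtInftyContinuousMap ℕ ℝ,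
      ∀ f : ↥(Zsub Y d), ∀ n : ℕ, e f n = (f : C(Y, ℝ)) (d n) := by
  let ev : ↥(Zsub Y d) →ₗ[ℝ] ZeroAtInftyContinuousMap ℕ ℝ :=
    { toFun := fun f =>
        ⟨⟨fun n => (f : C(Y, ℝ)) (d n), continuous_of_discreteTopology⟩,
          aux_tendsto hinj hiso f.1 f.2⟩
      map_add' := fun f g => by ext n; rfl
      map_smul' := fun c f => by ext n; rfl }
  have hev : ∀ (f : ↥(Zsub Y d)) (n : ℕ), ev f n = (f : C(Y, ℝ)) (d n) := fun f n => rfl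
  have hinjev : Function.Injective ev := by
    intro f g hfg
    ext y
    by_cases hy : y ∈ Set.range d
    · obtain ⟨n, rfl⟩ := hy
      have := congrArg (fun h : ZeroAtInftyContinuousMap ℕ ℝ => h n) hfg
      simpa [hev] using this
    · rw [f.2 y hy, g.2 y hy]
  have hsurjev : Function.Surjective ev := by
    intro g
    obtain ⟨f, hfd, hf0⟩ := aux_extend hinj hiso g
    refine ⟨⟨f, hf0⟩, ?_⟩
    ext n
    exact hfd n
  refine ⟨⟨LinearEquiv.ofBijective ev ⟨hinjev, hsurjev⟩, fun f => le_antisymm ?_ ?_⟩, fun f n => rfl⟩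
  · exact aux_czero_norm_le _ (norm_nonneg _) fun n => (f : C(Y, ℝ)).norm_coe_le_norm (d n)
  · exact aux_norm_le hdense (f : C(Y, ℝ)) (norm_nonneg _) fun n =>
      aux_czero_norm_coe_le (ev f) n

end Main

section Main2

variable {Y : Type} [TopologicalSpace Y] [CompactSpace Y] [T2Space Y]
  {d : ℕ → Y}

theorem aux_Rclosed (hiso : ∀ n : ℕ, IsOpen ({d n} : Set Y)) :
    IsClosed ((Set.range d)ᶜ : Set Y) := by
  rw [isClosed_compl_iff, Set.range_eq_iUnion]
  exact isOpen_iUnion hiso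

/-- Part (ii), given the compact space instance on the remainder. -/
theorem aux_part2 (hiso : ∀ n : ℕ, IsOpen ({d n} : Set Y))
    [CompactSpace ↥((Set.range d)ᶜ : Set Y)] :
    ∃ ρ : C(Y, ℝ) →L[ℝ] C(((Set.range d)ᶜ : Set Y), ℝ),
      (∀ f : C(Y, ℝ), ρ f = f.restrict ((Set.range d)ᶜ : Set Y)) ∧
      Function.Surjective ρ ∧ LinearMap.ker (ρ : C(Y, ℝ) →ₗ[ℝ] C(((Set.range d)ᶜ : Set Y), ℝ)) = Zsub Y d := by
  set R : Set Y := (Set.range d)ᶜ with hR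
  let ρL : C(Y, ℝ) →ₗ[ℝ] C(R, ℝ) :=
    { toFun := fun f => f.restrict R
      map_add' := fun f g => by ext x; rfl
      map_smul' := fun c f => by ext x; rfl }
  have hbound : ∀ f : C(Y, ℝ), ‖ρL f‖ ≤ 1 * ‖f‖ := by
    intro f
    rw [one_mul]
    exact (ContinuousMap.norm_le _ (norm_nonneg f)).2 fun x => f.norm_coe_le_norm x
  refine ⟨ρL.mkContinuous 1 hbound, fun f => rfl, ?_, ?_⟩
  · intro g
    obtain ⟨f, hf⟩ := g.exists_restrict_eq (aux_Rclosed hiso)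
    exact ⟨f, hf⟩
  · ext f
    simp only [LinearMap.mem_ker]
    constructor
    · intro h y hy
      have := ContinuousMap.congr_fun (h : ρL f = 0) ⟨y, hy⟩
      exact this
    · intro h
      ext ⟨y, hy⟩
      exact h y hy

theorem aux_qnorm (hiso : ∀ n : ℕ, IsOpen ({d n} : Set Y))
    [CompactSpace ↥((Set.range d)ᶜ : Set Y)] (f : C(Y, ℝ)) :
    ‖(Submodule.Quotient.mk f : C(Y, ℝ) ⧸ Zsub Y d)‖ =
      ‖f.restrict ((Set.range d)ᶜ : Set Y)‖ := by
  set R : Set Y := (Set.range d)ᶜ with hR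
  set M : ℝ := ‖f.restrict R‖ with hM
  have hM0 : 0 ≤ M := norm_nonneg _
  refine le_antisymm ?_ ?_
  · -- truncation
    let t : C(Y, ℝ) := ⟨fun y => max (-M) (min M (f y)), continuous_const.max (continuous_const.min f.continuous)⟩
    have habs : ∀ y : Y, y ∈ R → |f y| ≤ M := fun y hy => by
      have := (f.restrict R).norm_coe_le_norm ⟨y, hy⟩
      simpa [Real.norm_eq_abs] using this
    have hmem : f - t ∈ Zsub Y d := by
      intro y hy
      have h1 : |f y| ≤ M := habs y hy
      have h2 : t y = f y := by
        show max (-M) (min M (f y)) = f y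
        rw [min_eq_right (abs_le.1 h1).2, max_eq_right (abs_le.1 h1).1]
      show f y - t y = 0
      rw [h2, sub_self]
    have heq : (Submodule.Quotient.mk f : C(Y, ℝ) ⧸ Zsub Y d) = Submodule.Quotient.mk t :=
      (Submodule.Quotient.eq _).2 hmem
    rw [heq]
    refine le_trans (Submodule.Quotient.norm_mk_le (Zsub Y d) t) ?_
    refine (ContinuousMap.norm_le _ hM0).2 fun y => ?_
    show ‖max (-M) (min M (f y))‖ ≤ M
    rw [Real.norm_eq_abs, abs_le]
    exact ⟨le_max_left _ _, max_le (neg_le_self hM0) (min_le_left _ _)⟩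
  · refine le_of_forall_pos_le_add fun ε hε => ?_
    obtain ⟨m, hm, hmn⟩ :=
      Submodule.Quotient.norm_mk_lt (Submodule.Quotient.mk f : C(Y, ℝ) ⧸ Zsub Y d) hε
    have hmem : m - f ∈ Zsub Y d := (Submodule.Quotient.eq _).1 hm
    have hrest : f.restrict R = m.restrict R := by
      ext ⟨y, hy⟩
      have := hmem y hy
      have h2 : m y - f y = 0 := this
      show f y = m y
      linarith
    calc M = ‖m.restrict R‖ := by rw [hM, hrest]
    _ ≤ ‖m‖ := (ContinuousMap.norm_le _ (norm_nonneg m)).2 fun x => m.norm_coe_le_norm x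
    _ ≤ ‖(Submodule.Quotient.mk f : C(Y, ℝ) ⧸ Zsub Y d)‖ + ε := le_of_lt hmn

end Main2

section Main3

variable {Y : Type} [TopologicalSpace Y] [CompactSpace Y] [T2Space Y]
  {d : ℕ → Y}

theorem aux_part3 (hiso : ∀ n : ℕ, IsOpen ({d n} : Set Y))
    [CompactSpace ↥((Set.range d)ᶜ : Set Y)] :
    ∃ e : (C(Y, ℝ) ⧸ Zsub Y d) ≃ₗᵢ[ℝ] C(((Set.range d)ᶜ : Set Y), ℝ),
      ∀ f : C(Y, ℝ), e (Submodule.Quotient.mk f) = f.restrict ((Set.range d)ᶜ : Set Y) := by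
  obtain ⟨ρ, hρ, hsurj, hker⟩ := aux_part2 (d := d) hiso
  have hle0 : ∀ f ∈ Zsub Y d, ρ f = 0 := fun f hf => by
    rw [← hker] at hf; exact LinearMap.mem_ker.1 hf
  have hle : Zsub Y d ≤ LinearMap.ker ρ.toLinearMap := fun f hf =>
    LinearMap.mem_ker.2 (hle0 f hf)
  let L : (C(Y, ℝ) ⧸ Zsub Y d) →ₗ[ℝ] C(((Set.range d)ᶜ : Set Y), ℝ) :=
    Submodule.liftQ (Zsub Y d) ρ.toLinearMap hle
  have hL : ∀ f : C(Y, ℝ), L (Submodule.Quotient.mk f) = f.restrict ((Set.range d)ᶜ : Set Y) :=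
    fun f => hρ f
  have hLinj : Function.Injective L := by
    intro x y hxy
    obtain ⟨f, rfl⟩ := Submodule.Quotient.mk_surjective _ x
    obtain ⟨g, rfl⟩ := Submodule.Quotient.mk_surjective _ y
    rw [Submodule.Quotient.eq, ← hker, LinearMap.mem_ker]
    have : ρ f = ρ g := hxy
    rw [map_sub]
    rw [ContinuousLinearMap.coe_coe, this, sub_self]
  have hLsurj : Function.Surjective L := by
    intro g
    obtain ⟨f, hf⟩ := hsurj g
    exact ⟨Submodule.Quotient.mk f, hf⟩
  refine ⟨⟨LinearEquiv.ofBijective L ⟨hLinj, hLsurj⟩, fun x => ?_⟩, fun f => hL f⟩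
  obtain ⟨f, rfl⟩ := Submodule.Quotient.mk_surjective _ x
  show ‖L (Submodule.Quotient.mk f)‖ = _
  rw [hL f, aux_qnorm hiso f]

end Main3

/-- For a compactification `Y` of `ℕ` with remainder `R`: (i) evaluation along `d` is a
linear isometric bijection of `Z₀` onto `c₀`; (ii) restriction to `R` is a bounded
surjective linear operator with kernel `Z₀` inducing an isometric isomorphism
`C(Y)/Z₀ ≅ C(R)`. -/
theorem statement12 (Y : Type) [TopologicalSpace Y] [CompactSpace Y] [T2Space Y]
    (d : ℕ → Y) (hinj : Function.Injective d) (hdense : DenseRange d)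
    (hiso : ∀ n : ℕ, IsOpen ({d n} : Set Y)) :
    haveI : CompactSpace ↥((Set.range d)ᶜ : Set Y) := by
      refine isCompact_iff_compactSpace.mp (IsClosed.isCompact ?_)
      rw [isClosed_compl_iff, Set.range_eq_iUnion]
      exact isOpen_iUnion hiso
    (∃ e : ↥(Zsub Y d) ≃ₗᵢ[ℝ] czero,
      ∀ f : ↥(Zsub Y d), ∀ n : ℕ, e f n = (f : C(Y, ℝ)) (d n)) ∧
    (∃ ρ : C(Y, ℝ) →L[ℝ] C(((Set.range d)ᶜ : Set Y), ℝ),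
      (∀ f : C(Y, ℝ), ρ f = f.restrict ((Set.range d)ᶜ : Set Y)) ∧
      Function.Surjective ρ ∧ LinearMap.ker (ρ : C(Y, ℝ) →ₗ[ℝ] C(((Set.range d)ᶜ : Set Y), ℝ)) = Zsub Y d) ∧
    ∃ e : (C(Y, ℝ) ⧸ Zsub Y d) ≃ₗᵢ[ℝ] C(((Set.range d)ᶜ : Set Y), ℝ),
      ∀ f : C(Y, ℝ), e (Submodule.Quotient.mk f) = f.restrict ((Set.range d)ᶜ : Set Y) := by
  haveI : CompactSpace ↥((Set.range d)ᶜ : Set Y) := by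
    refine isCompact_iff_compactSpace.mp (IsClosed.isCompact ?_)
    rw [isClosed_compl_iff, Set.range_eq_iUnion]
    exact isOpen_iUnion hiso
  exact ⟨aux_part1 hinj hdense hiso, aux_part2 hiso, aux_part3 hiso⟩
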